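/- (Theorem 2, main result.) Let V, W', S, Q, R, μ₁, μ₂, μ₃, M_v, and the MAD iterates Y^{(t)} be as in the MAD iteration, and suppose that for some k ≥ 0 every row of Q and of R has ℓ₁-norm at most k. Fix positive integers w, d, a probability space Ω, and random hash functions h_1, …, h_d : Ω → (Fin m → Fin w) that are mutually independent, each pairwise uniform in the sense that for all distinct labels ℓ, ℓ', P(h_j(ℓ) = h_j(ℓ')) ≤ 1/w. Let Ŷ^{(t)}_{vℓ} denote the count-min estimate of Y^{(t)}_{vℓ} obtained from the count-min sketch of the row Y^{(t)}_v. Let ε > 0 and δ ∈ (0,1). If w ≥ e·k/ε and d ≥ ln(m/δ), then for every node v ∈ V and every iteration t ≥ 0, with probability at least 1 − δ, simultaneously for every label ℓ, Y^{(t)}_{vℓ} ≤ Ŷ^{(t)}_{vℓ} ≤ Y^{(t)}_{vℓ} + ε. -/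

import Mathlib

open Finset MeasureTheory ProbabilityTheory

/-- The count-min sketch of width `w` and depth `d` for `y : Fin m → ℝ`. -/
noncomputable def cmSketch {m w d : ℕ} (h : Fin d → Fin m → Fin w)
    (y : Fin m → ℝ) (j : Fin d) (c : Fin w) : ℝ :=
  ∑ i ∈ Finset.univ.filter (fun i => h j i = c), y i

/-- The count-min estimate of coordinate `ℓ`: `ŷ_ℓ = min_j S(y)_{j, h j ℓ}`. -/
noncomputable def cmEstimate {m w d : ℕ} (hd : 0 < d) (h : Fin d → Fin m → Fin w)
    (y : Fin m → ℝ) (ℓ : Fin m) : ℝ :=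
  Finset.univ.inf' ⟨⟨0, hd⟩, Finset.mem_univ _⟩ (fun j => cmSketch h y j (h j ℓ))

lemma cm_lower {m w d : ℕ} (hd : 0 < d) (h : Fin d → Fin m → Fin w)
    (y : Fin m → ℝ) (hy : ∀ i, 0 ≤ y i) (ℓ : Fin m) :
    y ℓ ≤ cmEstimate hd h y ℓ := by
  apply Finset.le_inf'
  intro j _
  exact Finset.single_le_sum (fun i _ => hy i) (by simp)

lemma cm_decomp {m w d : ℕ} (h : Fin d → Fin m → Fin w)
    (y : Fin m → ℝ) (j : Fin d) (ℓ : Fin m) :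
    cmSketch h y j (h j ℓ) =
      y ℓ + ∑ i ∈ (Finset.univ.filter (fun i => h j i = h j ℓ)).erase ℓ, y i := by
  unfold cmSketch
  rw [← Finset.add_sum_erase _ y (by simp : ℓ ∈ Finset.univ.filter (fun i => h j i = h j ℓ))]

def badSet {Ω : Type*} {m w d : ℕ} (h : Fin d → Ω → Fin m → Fin w) (y : Fin m → ℝ)
    (ε : ℝ) (j : Fin d) (ℓ : Fin m) : Set Ω :=
  {ω | ε ≤ ∑ i ∈ (Finset.univ.filter (fun i => h j ω i = h j ω ℓ)).erase ℓ, y i}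

lemma badSet_prob {Ω : Type*} [MeasureSpace Ω] [IsProbabilityMeasure (ℙ : Measure Ω)]
    {m w d : ℕ} (hw : 0 < w) (h : Fin d → Ω → Fin m → Fin w) (hmeas : ∀ j, Measurable (h j))
    (hpair : ∀ (j : Fin d) (ℓ ℓ' : Fin m), ℓ ≠ ℓ' →
        ℙ {ω | h j ω ℓ = h j ω ℓ'} ≤ 1 / w)
    (y : Fin m → ℝ) (hy : ∀ i, 0 ≤ y i) (k : ℝ) (hyk : ∑ i, y i ≤ k)
    (ε : ℝ) (hε : 0 < ε) (hwε : Real.exp 1 * k / ε ≤ w)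
    (j : Fin d) (ℓ : Fin m) :
    ℙ (badSet h y ε j ℓ) ≤ ENNReal.ofReal (Real.exp (-1)) := by
  have hA : ∀ i : Fin m, MeasurableSet {ω' : Ω | h j ω' i = h j ω' ℓ} := by
    intro i
    have : {ω' : Ω | h j ω' i = h j ω' ℓ} = h j ⁻¹' {g | g i = g ℓ} := rfl
    rw [this]
    exact (hmeas j) ((Set.toFinite _).measurableSet)
  set F : Ω → ENNReal := fun ω => ∑ i ∈ Finset.univ.erase ℓ,
      Set.indicator {ω' | h j ω' i = h j ω' ℓ} (fun _ => ENNReal.ofReal (y i)) ω with hF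
  have hfo : ∀ ω, F ω = ENNReal.ofReal
      (∑ i ∈ (Finset.univ.filter (fun i => h j ω i = h j ω ℓ)).erase ℓ, y i) := by
    intro ω
    have h1 : (Finset.univ.filter (fun i => h j ω i = h j ω ℓ)).erase ℓ
        = (Finset.univ.erase ℓ).filter (fun i => h j ω i = h j ω ℓ) := by
      ext i
      simp only [Finset.mem_erase, Finset.mem_filter, Finset.mem_univ, true_and]
      tauto
    rw [h1, Finset.sum_filter,
      ENNReal.ofReal_sum_of_nonneg (fun i _ => by split <;> [exact hy i; rfl])]
    refine Finset.sum_congr rfl fun i _ => ?_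
    rw [Set.indicator_apply]
    simp only [Set.mem_setOf_eq]
    split <;> simp
  have hmeasF : Measurable F := by
    apply Finset.measurable_sum
    intro i _
    exact measurable_const.indicator (hA i)
  have hint : ∫⁻ ω, F ω = ∑ i ∈ Finset.univ.erase ℓ,
      ENNReal.ofReal (y i) * ℙ {ω' | h j ω' i = h j ω' ℓ} := by
    rw [hF, lintegral_finset_sum _ (fun i _ => measurable_const.indicator (hA i))]
    refine Finset.sum_congr rfl fun i _ => ?_
    rw [lintegral_indicator (hA i), setLIntegral_const]
  have hintle : ∫⁻ ω, F ω ≤ ENNReal.ofReal k / w := by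
    rw [hint]
    calc ∑ i ∈ Finset.univ.erase ℓ, ENNReal.ofReal (y i) * ℙ {ω' | h j ω' i = h j ω' ℓ}
        ≤ ∑ i ∈ Finset.univ.erase ℓ, ENNReal.ofReal (y i) * (1 / w) := by
          refine Finset.sum_le_sum fun i hi => ?_
          exact mul_le_mul_right (hpair j i ℓ (Finset.mem_erase.1 hi).1) _
      _ = (∑ i ∈ Finset.univ.erase ℓ, ENNReal.ofReal (y i)) * (1 / w) :=
          (Finset.sum_mul _ _ _).symm
      _ ≤ ENNReal.ofReal k * (1 / w) := by
          refine mul_le_mul_left ?_ _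
          rw [← ENNReal.ofReal_sum_of_nonneg (fun i _ => hy i)]
          refine ENNReal.ofReal_le_ofReal ?_
          calc ∑ i ∈ Finset.univ.erase ℓ, y i ≤ ∑ i, y i :=
                Finset.sum_le_sum_of_subset_of_nonneg (Finset.subset_univ _)
                  (fun i _ _ => hy i)
            _ ≤ k := hyk
      _ = ENNReal.ofReal k / w := by rw [mul_one_div]
  have hsubset : badSet h y ε j ℓ ⊆ {ω | ENNReal.ofReal ε ≤ F ω} := by
    intro ω hω
    simp only [Set.mem_setOf_eq]
    rw [hfo ω]
    exact ENNReal.ofReal_le_ofReal hω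
  calc ℙ (badSet h y ε j ℓ) ≤ ℙ {ω | ENNReal.ofReal ε ≤ F ω} := measure_mono hsubset
    _ ≤ (∫⁻ ω, F ω) / ENNReal.ofReal ε :=
        meas_ge_le_lintegral_div hmeasF.aemeasurable
          (ENNReal.ofReal_pos.2 hε).ne' ENNReal.ofReal_ne_top
    _ ≤ ENNReal.ofReal k / w / ENNReal.ofReal ε := ENNReal.div_le_div_right hintle _
    _ ≤ ENNReal.ofReal (Real.exp (-1)) := by
        have hwpos : (0:ℝ) < w := by exact_mod_cast hw
        have hcast : (w : ENNReal) = ENNReal.ofReal (w : ℝ) := by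
          rw [ENNReal.ofReal_natCast]
        rw [hcast, ← ENNReal.ofReal_div_of_pos hwpos, ← ENNReal.ofReal_div_of_pos hε]
        refine ENNReal.ofReal_le_ofReal ?_
        have h1 : Real.exp 1 * k ≤ w * ε := by
          rw [div_le_iff₀ hε] at hwε; linarith
        have h2 : k / (w:ℝ) / ε = k / ((w:ℝ) * ε) := by ring
        rw [h2, Real.exp_neg, div_le_iff₀ (by positivity), inv_mul_eq_div,
          le_div_iff₀ (Real.exp_pos 1)]
        nlinarith [Real.exp_pos 1]

/-- Theorem 2 (main result): if every row of `Q` and `R` has ℓ₁-norm at most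
`k`, the hash functions are independent and pairwise uniform, `w ≥ e k / ε`
and `d ≥ ln(m/δ)`, then for every node `v` and iteration `t`, with probability
at least `1 - δ`, simultaneously for every label `ℓ`,
`Y^{(t)}_{vℓ} ≤ Ŷ^{(t)}_{vℓ} ≤ Y^{(t)}_{vℓ} + ε`. -/
theorem mad_sketch_approximation_error
    (V : Type*) [Fintype V] [DecidableEq V] (m w d : ℕ)
    (hm : 0 < m) (hw : 0 < w) (hd : 0 < d)
    (W' : V → V → ℝ) (hW : ∀ u v, 0 ≤ W' u v) (hWdiag : ∀ v, W' v v = 0)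
    (S : V → ℝ) (hS : ∀ v, S v = 0 ∨ S v = 1)
    (Q R : V → Fin m → ℝ) (hQ : ∀ v ℓ, 0 ≤ Q v ℓ) (hR : ∀ v ℓ, 0 ≤ R v ℓ)
    (μ₁ μ₂ μ₃ : ℝ) (hμ₁ : 0 < μ₁) (hμ₂ : 0 < μ₂) (hμ₃ : 0 < μ₃)
    (M : V → ℝ)
    (hM : ∀ v, M v = μ₁ * S v
        + μ₂ * ∑ u ∈ Finset.univ.filter (fun u => u ≠ v), (W' u v + W' v u)
        + μ₃)
    (Y : ℕ → V → Fin m → ℝ)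
    (hY0 : Y 0 = Q)
    (hYsucc : ∀ t v ℓ, Y (t + 1) v ℓ =
        (1 / M v) * (μ₁ * S v * Q v ℓ
          + μ₂ * ∑ u, (W' u v + W' v u) * Y t u ℓ
          + μ₃ * R v ℓ))
    (k : ℝ) (hk : 0 ≤ k)
    (hQk : ∀ v, (∑ ℓ, |Q v ℓ|) ≤ k) (hRk : ∀ v, (∑ ℓ, |R v ℓ|) ≤ k)
    {Ω : Type*} [MeasureSpace Ω] [IsProbabilityMeasure (ℙ : Measure Ω)]
    (h : Fin d → Ω → Fin m → Fin w) (hmeas : ∀ j, Measurable (h j))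
    (hindep : iIndepFun h ℙ)
    (hpair : ∀ (j : Fin d) (ℓ ℓ' : Fin m), ℓ ≠ ℓ' →
        ℙ {ω | h j ω ℓ = h j ω ℓ'} ≤ 1 / w)
    (ε δ : ℝ) (hε : 0 < ε) (hδ0 : 0 < δ) (hδ1 : δ < 1)
    (hwε : Real.exp 1 * k / ε ≤ w) (hdδ : Real.log (m / δ) ≤ d) :
    ∀ (v : V) (t : ℕ),
      1 - ENNReal.ofReal δ ≤
        ℙ {ω | ∀ ℓ : Fin m,
                Y t v ℓ ≤ cmEstimate hd (fun j => h j ω) (Y t v) ℓ ∧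
                cmEstimate hd (fun j => h j ω) (Y t v) ℓ ≤ Y t v ℓ + ε} := by
  intro v t
  have hSnn : ∀ u, 0 ≤ S u := by
    intro u; rcases hS u with h' | h' <;> rw [h'] <;> norm_num
  have hMpos : ∀ u, 0 < M u := by
    intro u
    rw [hM u]
    have h2 : 0 ≤ μ₂ * ∑ x ∈ Finset.univ.filter (fun x => x ≠ u), (W' x u + W' u x) :=
      mul_nonneg hμ₂.le (Finset.sum_nonneg fun x _ => add_nonneg (hW _ _) (hW _ _))
    have h1 : 0 ≤ μ₁ * S u := mul_nonneg hμ₁.le (hSnn u)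
    linarith
  -- all iterates are nonnegative with ℓ₁-norm at most k
  have key : ∀ t u, (∀ ℓ, 0 ≤ Y t u ℓ) ∧ (∑ ℓ, Y t u ℓ) ≤ k := by
    intro t
    induction t with
    | zero =>
      intro u
      rw [hY0]
      refine ⟨hQ u, ?_⟩
      calc ∑ ℓ, Q u ℓ = ∑ ℓ, |Q u ℓ| :=
            Finset.sum_congr rfl fun ℓ _ => (abs_of_nonneg (hQ u ℓ)).symm
        _ ≤ k := hQk u
    | succ t ih =>
      intro u
      have hwnn : ∀ x, 0 ≤ W' x u + W' u x := fun x => add_nonneg (hW _ _) (hW _ _)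
      have hMnn : 0 ≤ 1 / M u := one_div_nonneg.2 (hMpos u).le
      constructor
      · intro ℓ
        rw [hYsucc]
        refine mul_nonneg hMnn (add_nonneg (add_nonneg ?_ ?_) ?_)
        · exact mul_nonneg (mul_nonneg hμ₁.le (hSnn u)) (hQ u ℓ)
        · exact mul_nonneg hμ₂.le
            (Finset.sum_nonneg fun x _ => mul_nonneg (hwnn x) ((ih x).1 ℓ))
        · exact mul_nonneg hμ₃.le (hR u ℓ)
      · have hfull : ∑ x ∈ Finset.univ.filter (fun x => x ≠ u), (W' x u + W' u x)
            = ∑ x, (W' x u + W' u x) := by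
          apply Finset.sum_subset (Finset.filter_subset _ _)
          intro x _ hx
          have hxu : x = u := by simpa using hx
          simp [hxu, hWdiag]
        have hQu : ∑ ℓ, Q u ℓ ≤ k := by
          calc ∑ ℓ, Q u ℓ = ∑ ℓ, |Q u ℓ| :=
                Finset.sum_congr rfl fun ℓ _ => (abs_of_nonneg (hQ u ℓ)).symm
            _ ≤ k := hQk u
        have hRu : ∑ ℓ, R u ℓ ≤ k := by
          calc ∑ ℓ, R u ℓ = ∑ ℓ, |R u ℓ| :=
                Finset.sum_congr rfl fun ℓ _ => (abs_of_nonneg (hR u ℓ)).symm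
            _ ≤ k := hRk u
        calc ∑ ℓ, Y (t + 1) u ℓ
            = (1 / M u) * (μ₁ * S u * (∑ ℓ, Q u ℓ)
              + μ₂ * ∑ x, (W' x u + W' u x) * (∑ ℓ, Y t x ℓ)
              + μ₃ * (∑ ℓ, R u ℓ)) := by
              have hmid : ∑ ℓ : Fin m, ∑ x, (W' x u + W' u x) * Y t x ℓ
                  = ∑ x, (W' x u + W' u x) * ∑ ℓ, Y t x ℓ := by
                rw [Finset.sum_comm]
                exact Finset.sum_congr rfl fun x _ => (Finset.mul_sum _ _ _).symm
              simp only [hYsucc]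
              rw [← Finset.mul_sum, Finset.sum_add_distrib, Finset.sum_add_distrib,
                ← Finset.mul_sum, ← Finset.mul_sum, ← Finset.mul_sum, hmid]
          _ ≤ (1 / M u) * (μ₁ * S u * k
              + μ₂ * ((∑ x, (W' x u + W' u x)) * k) + μ₃ * k) := by
              refine mul_le_mul_of_nonneg_left ?_ hMnn
              have b1 : μ₁ * S u * (∑ ℓ, Q u ℓ) ≤ μ₁ * S u * k :=
                mul_le_mul_of_nonneg_left hQu (mul_nonneg hμ₁.le (hSnn u))
              have b2 : ∑ x, (W' x u + W' u x) * (∑ ℓ, Y t x ℓ)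
                  ≤ (∑ x, (W' x u + W' u x)) * k := by
                rw [Finset.sum_mul]
                exact Finset.sum_le_sum fun x _ =>
                  mul_le_mul_of_nonneg_left (ih x).2 (hwnn x)
              have b2' : μ₂ * ∑ x, (W' x u + W' u x) * (∑ ℓ, Y t x ℓ)
                  ≤ μ₂ * ((∑ x, (W' x u + W' u x)) * k) :=
                mul_le_mul_of_nonneg_left b2 hμ₂.le
              have b3 : μ₃ * (∑ ℓ, R u ℓ) ≤ μ₃ * k :=
                mul_le_mul_of_nonneg_left hRu hμ₃.le
              linarith
          _ = k := by
              have hMk : μ₁ * S u * k + μ₂ * ((∑ x, (W' x u + W' u x)) * k) + μ₃ * k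
                  = M u * k := by
                rw [hM u, hfull]; ring
              rw [hMk, one_div, inv_mul_cancel_left₀ (hMpos u).ne']
  obtain ⟨hy0, hyk⟩ := key t v
  set y : Fin m → ℝ := Y t v with hy
  -- the good event contains the complement of the union of bad events
  have hsub : (⋃ ℓ, ⋂ j ∈ Finset.univ, badSet h y ε j ℓ)ᶜ ⊆
      {ω | ∀ ℓ : Fin m,
            y ℓ ≤ cmEstimate hd (fun j => h j ω) y ℓ ∧
            cmEstimate hd (fun j => h j ω) y ℓ ≤ y ℓ + ε} := by
    intro ω hω
    simp only [Set.mem_compl_iff, Set.mem_iUnion, Set.mem_iInter, not_exists,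
      not_forall] at hω
    intro ℓ
    refine ⟨cm_lower hd _ y hy0 ℓ, ?_⟩
    obtain ⟨j, _, hj⟩ := hω ℓ
    have hlt : ∑ i ∈ (Finset.univ.filter
        (fun i => h j ω i = h j ω ℓ)).erase ℓ, y i < ε := by
      by_contra hc
      exact hj (not_lt.1 hc)
    calc cmEstimate hd (fun j' => h j' ω) y ℓ
        ≤ cmSketch (fun j' => h j' ω) y j (h j ω ℓ) :=
          Finset.inf'_le _ (Finset.mem_univ j)
      _ = y ℓ + ∑ i ∈ (Finset.univ.filter
            (fun i => h j ω i = h j ω ℓ)).erase ℓ, y i :=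
          cm_decomp (fun j' => h j' ω) y j ℓ
      _ ≤ y ℓ + ε := by linarith
  -- probability that all rows are bad for a fixed label
  have hbadInter : ∀ ℓ : Fin m,
      ℙ (⋂ j ∈ Finset.univ, badSet h y ε j ℓ) ≤ ENNReal.ofReal (δ / m) := by
    intro ℓ
    have heq : ℙ (⋂ j ∈ Finset.univ, badSet h y ε j ℓ)
        = ∏ j ∈ Finset.univ, ℙ (badSet h y ε j ℓ) := by
      refine iIndep.meas_biInter hindep ?_
      intro j _
      exact ⟨{g | ε ≤ ∑ i ∈ (Finset.univ.filter (fun i => g i = g ℓ)).erase ℓ, y i},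
        (Set.toFinite _).measurableSet, rfl⟩
    rw [heq]
    calc ∏ j ∈ Finset.univ, ℙ (badSet h y ε j ℓ)
        ≤ ∏ _j ∈ (Finset.univ : Finset (Fin d)), ENNReal.ofReal (Real.exp (-1)) :=
          Finset.prod_le_prod' fun j _ =>
            badSet_prob hw h hmeas hpair y hy0 k hyk ε hε hwε j ℓ
      _ = ENNReal.ofReal (Real.exp (-1)) ^ d := by
          rw [Finset.prod_const, Finset.card_univ, Fintype.card_fin]
      _ = ENNReal.ofReal (Real.exp (-1) ^ d) :=
          (ENNReal.ofReal_pow (Real.exp_pos _).le d).symm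
      _ = ENNReal.ofReal (Real.exp (-(d:ℝ))) := by
          rw [← Real.exp_nat_mul]
          congr 1
          ring
      _ ≤ ENNReal.ofReal (δ / m) := by
          refine ENNReal.ofReal_le_ofReal ?_
          have hmδ : (0:ℝ) < m / δ := by positivity
          have hle : (m:ℝ) / δ ≤ Real.exp d := by
            calc (m:ℝ) / δ = Real.exp (Real.log ((m:ℝ) / δ)) := (Real.exp_log hmδ).symm
              _ ≤ Real.exp d := Real.exp_le_exp.2 hdδ
          rw [Real.exp_neg]
          calc (Real.exp (d:ℝ))⁻¹ ≤ ((m:ℝ) / δ)⁻¹ :=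
                inv_anti₀ hmδ hle
            _ = δ / m := by rw [inv_div]
  -- union bound
  have hunion : ℙ (⋃ ℓ, ⋂ j ∈ Finset.univ, badSet h y ε j ℓ)
      ≤ ENNReal.ofReal δ := by
    calc ℙ (⋃ ℓ, ⋂ j ∈ Finset.univ, badSet h y ε j ℓ)
        ≤ ∑ ℓ : Fin m, ℙ (⋂ j ∈ Finset.univ, badSet h y ε j ℓ) :=
          measure_iUnion_fintype_le _ _
      _ ≤ ∑ _ℓ : Fin m, ENNReal.ofReal (δ / m) :=
          Finset.sum_le_sum fun ℓ _ => hbadInter ℓ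
      _ = (m : ENNReal) * ENNReal.ofReal (δ / m) := by
          rw [Finset.sum_const, Finset.card_univ, Fintype.card_fin, nsmul_eq_mul]
      _ = ENNReal.ofReal δ := by
          rw [← ENNReal.ofReal_natCast m, ← ENNReal.ofReal_mul (by positivity)]
          congr 1
          field_simp
  -- conclude
  have h1 : (1 : ENNReal) ≤
      ℙ ((⋃ ℓ, ⋂ j ∈ Finset.univ, badSet h y ε j ℓ)ᶜ)
      + ℙ (⋃ ℓ, ⋂ j ∈ Finset.univ, badSet h y ε j ℓ) := by
    have h2 := measure_union_le (μ := (ℙ : Measure Ω))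
      ((⋃ ℓ, ⋂ j ∈ Finset.univ, badSet h y ε j ℓ)ᶜ)
      (⋃ ℓ, ⋂ j ∈ Finset.univ, badSet h y ε j ℓ)
    rwa [Set.compl_union_self, measure_univ] at h2
  calc 1 - ENNReal.ofReal δ
      ≤ 1 - ℙ (⋃ ℓ, ⋂ j ∈ Finset.univ, badSet h y ε j ℓ) :=
        tsub_le_tsub_left hunion 1
    _ ≤ ℙ ((⋃ ℓ, ⋂ j ∈ Finset.univ, badSet h y ε j ℓ)ᶜ) := by
        rw [tsub_le_iff_right]
        exact h1
    _ ≤ _ := measure_mono hsub
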